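/- There exists a universal constant c such that: for every finite-dimensional complex Hilbert space H, every δ ≥ 0, and every unit vector φ ∈ ℂ² ⊗ ℂ² ⊗ H satisfying ‖(σx ⊗ σx ⊗ I)φ − φ‖ ≤ δ and ‖(σz ⊗ σz ⊗ I)φ − φ‖ ≤ δ, there is a unit vector φ' ∈ H with ‖φ − |EPR⟩ ⊗ φ'‖ ≤ c·δ. -/

import Mathlib

open scoped Matrix Kronecker ComplexConjugate

noncomputable section

abbrev Reg (n : ℕ) := (Fin n × Fin 2) → Fin 2

def cnorm {ι : Type*} [Fintype ι] (v : ι → ℂ) : ℝ :=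
  Real.sqrt (∑ i, ‖v i‖ ^ 2)

def cinner {ι : Type*} [Fintype ι] (v w : ι → ℂ) : ℂ :=
  ∑ i, (starRingEnd ℂ) (v i) * w i

def IsReflection {ι : Type*} [Fintype ι] [DecidableEq ι] (M : Matrix ι ι ℂ) : Prop :=
  M.IsHermitian ∧ M * M = 1

def sx : Matrix (Fin 2) (Fin 2) ℂ := !![0, 1; 1, 0]
def sy : Matrix (Fin 2) (Fin 2) ℂ := !![0, -Complex.I; Complex.I, 0]
def sz : Matrix (Fin 2) (Fin 2) ℂ := !![1, 0; 0, -1]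

def onQubit {K : Type*} [Fintype K] [DecidableEq K] (k : K) (M : Matrix (Fin 2) (Fin 2) ℂ) :
    Matrix (K → Fin 2) (K → Fin 2) ℂ :=
  fun f g => if ∀ k', k' ≠ k → f k' = g k' then M (f k) (g k) else 0

def eprAmp : Fin 2 → Fin 2 → ℂ := fun a b => if a = b then ((Real.sqrt 2 : ℝ) : ℂ)⁻¹ else 0

def eprLocal (n : ℕ) : Reg n → ℂ := fun f => ∏ j : Fin n, eprAmp (f (j, 0)) (f (j, 1))

def psiExt {dA dB : ℕ} (n : ℕ) (ψ : Fin dA × Fin dB → ℂ) :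
    (Fin dA × Reg n) × (Fin dB × Reg n) → ℂ :=
  fun p => ψ (p.1.1, p.2.1) * eprLocal n p.1.2 * eprLocal n p.2.2

def NQubitHyp (n : ℕ) (ε : ℝ) {dA dB : ℕ}
    (XA ZA : Fin n → Matrix (Fin dA) (Fin dA) ℂ)
    (XB ZB : Fin n → Matrix (Fin dB) (Fin dB) ℂ)
    (ψ : Fin dA × Fin dB → ℂ) : Prop :=
  cnorm ψ = 1 ∧
  (∀ j, IsReflection (XA j) ∧ IsReflection (ZA j) ∧ IsReflection (XB j) ∧ IsReflection (ZB j)) ∧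
  (∀ j, XA j * ZA j + ZA j * XA j = 0) ∧
  (∀ j, XB j * ZB j + ZB j * XB j = 0) ∧
  (∀ P Q : Fin n → Matrix (Fin dA) (Fin dA) ℂ, (P = XA ∨ P = ZA) → (Q = XA ∨ Q = ZA) →
    ∀ i j : Fin n, i ≠ j →
    cnorm (((P i * Q j - Q j * P i) ⊗ₖ (1 : Matrix (Fin dB) (Fin dB) ℂ)).mulVec ψ) ≤ ε) ∧
  (∀ P Q : Fin n → Matrix (Fin dB) (Fin dB) ℂ, (P = XB ∨ P = ZB) → (Q = XB ∨ Q = ZB) →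
    ∀ i j : Fin n, i ≠ j →
    cnorm (((1 : Matrix (Fin dA) (Fin dA) ℂ) ⊗ₖ (P i * Q j - Q j * P i)).mulVec ψ) ≤ ε) ∧
  (∀ (P : Fin n → Matrix (Fin dA) (Fin dA) ℂ) (P' : Fin n → Matrix (Fin dB) (Fin dB) ℂ),
    ((P = XA ∧ P' = XB) ∨ (P = ZA ∧ P' = ZB)) →
    ∀ j, cnorm ((P j ⊗ₖ P' j).mulVec ψ - ψ) ≤ ε)



namespace Stmt2Aux

def toE {ι : Type*} [Fintype ι] (v : ι → ℂ) : EuclideanSpace ℂ ι := WithLp.toLp 2 v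

lemma cnorm_eq_norm {ι : Type*} [Fintype ι] (v : ι → ℂ) :
    cnorm v = ‖toE v‖ := (EuclideanSpace.norm_eq _).symm

lemma s_mul_s : (((Real.sqrt 2 : ℝ) : ℂ))⁻¹ * (((Real.sqrt 2 : ℝ) : ℂ))⁻¹ = 1/2 := by
  rw [← mul_inv]
  norm_cast
  rw [Real.mul_self_sqrt (by norm_num : (0:ℝ) ≤ 2)]
  norm_num

lemma s_norm_sq : ‖(((Real.sqrt 2 : ℝ) : ℂ))⁻¹‖^2 = 1/2 := by
  rw [norm_inv, Complex.norm_real, Real.norm_eq_abs, abs_of_nonneg (Real.sqrt_nonneg 2)]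
  rw [inv_pow, Real.sq_sqrt (by norm_num : (0:ℝ) ≤ 2)]; norm_num

lemma parallelo (a d : ℂ) : ‖a + d‖^2/2 + ‖a - d‖^2/2 = ‖a‖^2 + ‖d‖^2 := by
  have := parallelogram_law_with_norm ℝ a d
  nlinarith [this]

lemma mulVec_kron1 {m : ℕ} (A : Matrix (Fin 2 × Fin 2) (Fin 2 × Fin 2) ℂ)
    (φ : (Fin 2 × Fin 2) × Fin m → ℂ) (q : Fin 2 × Fin 2) (k : Fin m) :
    (A ⊗ₖ (1 : Matrix (Fin m) (Fin m) ℂ)).mulVec φ (q, k)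
      = ∑ r : Fin 2 × Fin 2, A q r * φ (r, k) := by
  simp [Matrix.mulVec, dotProduct, Fintype.sum_prod_type, Matrix.kroneckerMap_apply,
    Matrix.one_apply, mul_ite, ite_mul, mul_assoc]

lemma sum_expand {m : ℕ} (f : (Fin 2 × Fin 2) × Fin m → ℝ) :
    ∑ p, f p = ∑ k, (f ((0,0),k) + f ((0,1),k) + f ((1,0),k) + f ((1,1),k)) := by
  rw [Fintype.sum_prod_type, Finset.sum_comm]
  congr 1; ext k
  simp [Fintype.sum_prod_type, Fin.sum_univ_two, add_assoc]

variable {m : ℕ} (φ : (Fin 2 × Fin 2) × Fin m → ℂ) (k : Fin m)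

lemma X00 : ((sx ⊗ₖ sx) ⊗ₖ (1 : Matrix (Fin m) (Fin m) ℂ)).mulVec φ ((0,0), k) = φ ((1,1),k) := by
  rw [mulVec_kron1]; simp [Fintype.sum_prod_type, Fin.sum_univ_two, Matrix.kroneckerMap_apply, sx]
lemma X01 : ((sx ⊗ₖ sx) ⊗ₖ (1 : Matrix (Fin m) (Fin m) ℂ)).mulVec φ ((0,1), k) = φ ((1,0),k) := by
  rw [mulVec_kron1]; simp [Fintype.sum_prod_type, Fin.sum_univ_two, Matrix.kroneckerMap_apply, sx]
lemma X10 : ((sx ⊗ₖ sx) ⊗ₖ (1 : Matrix (Fin m) (Fin m) ℂ)).mulVec φ ((1,0), k) = φ ((0,1),k) := by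
  rw [mulVec_kron1]; simp [Fintype.sum_prod_type, Fin.sum_univ_two, Matrix.kroneckerMap_apply, sx]
lemma X11 : ((sx ⊗ₖ sx) ⊗ₖ (1 : Matrix (Fin m) (Fin m) ℂ)).mulVec φ ((1,1), k) = φ ((0,0),k) := by
  rw [mulVec_kron1]; simp [Fintype.sum_prod_type, Fin.sum_univ_two, Matrix.kroneckerMap_apply, sx]
lemma Z00 : ((sz ⊗ₖ sz) ⊗ₖ (1 : Matrix (Fin m) (Fin m) ℂ)).mulVec φ ((0,0), k) = φ ((0,0),k) := by
  rw [mulVec_kron1]; simp [Fintype.sum_prod_type, Fin.sum_univ_two, Matrix.kroneckerMap_apply, sz]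
lemma Z01 : ((sz ⊗ₖ sz) ⊗ₖ (1 : Matrix (Fin m) (Fin m) ℂ)).mulVec φ ((0,1), k) = -φ ((0,1),k) := by
  rw [mulVec_kron1]; simp [Fintype.sum_prod_type, Fin.sum_univ_two, Matrix.kroneckerMap_apply, sz]
lemma Z10 : ((sz ⊗ₖ sz) ⊗ₖ (1 : Matrix (Fin m) (Fin m) ℂ)).mulVec φ ((1,0), k) = -φ ((1,0),k) := by
  rw [mulVec_kron1]; simp [Fintype.sum_prod_type, Fin.sum_univ_two, Matrix.kroneckerMap_apply, sz]
lemma Z11 : ((sz ⊗ₖ sz) ⊗ₖ (1 : Matrix (Fin m) (Fin m) ℂ)).mulVec φ ((1,1), k) = φ ((1,1),k) := by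
  rw [mulVec_kron1]; simp [Fintype.sum_prod_type, Fin.sum_univ_two, Matrix.kroneckerMap_apply, sz]

lemma epr_sum_sq {m : ℕ} (u : Fin m → ℂ) :
    ∑ p : (Fin 2 × Fin 2) × Fin m, ‖eprAmp p.1.1 p.1.2 * u p.2‖^2 = ∑ k, ‖u k‖^2 := by
  rw [sum_expand (fun p => ‖eprAmp p.1.1 p.1.2 * u p.2‖^2)]
  refine Finset.sum_congr rfl fun k _ => ?_
  simp only [eprAmp]
  norm_num [norm_mul, mul_pow, s_norm_sq]
  ring

lemma epr_norm {m : ℕ} (u : Fin m → ℂ) :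
    ‖toE (fun p : (Fin 2 × Fin 2) × Fin m => eprAmp p.1.1 p.1.2 * u p.2)‖ = ‖toE u‖ := by
  rw [EuclideanSpace.norm_eq, EuclideanSpace.norm_eq]
  congr 1
  exact epr_sum_sq u

lemma cnorm_sq_of_le {ι : Type*} [Fintype ι] {v : ι → ℂ} {δ : ℝ} (h : cnorm v ≤ δ) :
    ∑ i, ‖v i‖^2 ≤ δ^2 := by
  have h0 : (0:ℝ) ≤ ∑ i, ‖v i‖^2 := Finset.sum_nonneg fun i _ => sq_nonneg _
  have := Real.sq_sqrt h0
  have hc : (0:ℝ) ≤ cnorm v := Real.sqrt_nonneg _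
  calc ∑ i, ‖v i‖^2 = (cnorm v)^2 := by rw [cnorm]; rw [Real.sq_sqrt h0]
    _ ≤ δ^2 := by nlinarith

end Stmt2Aux

namespace Stmt2Aux
lemma n4 (z : ℂ) : ‖-z - z‖^2 = 4*‖z‖^2 := by
  rw [show -z - z = (-2)*z by ring, norm_mul, mul_pow]
  norm_num [Complex.norm_ofNat]
lemma ndiv2 (z : ℂ) : ‖z/2‖^2 = ‖z‖^2/4 := by
  rw [norm_div, div_pow]
  norm_num [Complex.norm_ofNat]
end Stmt2Aux

set_option maxHeartbeats 1000000 in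
/-- Claim (a state nearly stabilized by σx⊗σx and σz⊗σz is close to EPR ⊗ junk). -/
theorem stmt_2 :
    ∃ c : ℝ, 0 < c ∧
    ∀ (m : ℕ) (δ : ℝ), 0 ≤ δ →
    ∀ φ : (Fin 2 × Fin 2) × Fin m → ℂ,
      cnorm φ = 1 →
      cnorm (((sx ⊗ₖ sx) ⊗ₖ (1 : Matrix (Fin m) (Fin m) ℂ)).mulVec φ - φ) ≤ δ →
      cnorm (((sz ⊗ₖ sz) ⊗ₖ (1 : Matrix (Fin m) (Fin m) ℂ)).mulVec φ - φ) ≤ δ →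
      ∃ φ' : Fin m → ℂ, cnorm φ' = 1 ∧
        cnorm (fun p => φ p - eprAmp p.1.1 p.1.2 * φ' p.2) ≤ c * δ := by
  refine ⟨2, by norm_num, ?_⟩
  intro m δ hδ φ hφ hX hZ
  rcases Nat.eq_zero_or_pos m with hm | hm
  · exfalso
    subst hm
    rw [cnorm] at hφ
    simp at hφ
  have hφ2 : ∑ p, ‖φ p‖^2 = 1 := by
    rw [cnorm, Real.sqrt_eq_one] at hφ; exact hφ
  have hφE : ‖Stmt2Aux.toE φ‖ = 1 := by rw [← Stmt2Aux.cnorm_eq_norm]; exact hφ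
  by_cases hδ1 : 1 ≤ δ
  · -- trivial case: any unit vector works
    refine ⟨fun k => if k = ⟨0, hm⟩ then 1 else 0, ?_, ?_⟩
    · rw [cnorm]
      have : ∑ k : Fin m, ‖if k = (⟨0, hm⟩ : Fin m) then (1:ℂ) else 0‖^2 = 1 := by
        simp [apply_ite (fun z : ℂ => ‖z‖^2), apply_ite (fun z : ℂ => ‖z‖), Finset.sum_ite_eq']
      rw [this, Real.sqrt_one]
    · set e : Fin m → ℂ := fun k => if k = ⟨0, hm⟩ then 1 else 0 with he
      have hce : cnorm e = 1 := by
        rw [cnorm]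
        have : ∑ k : Fin m, ‖e k‖^2 = 1 := by
          simp [he, apply_ite (fun z : ℂ => ‖z‖^2), apply_ite (fun z : ℂ => ‖z‖), Finset.sum_ite_eq']
        rw [this, Real.sqrt_one]
      have heE : ‖Stmt2Aux.toE e‖ = 1 := by rw [← Stmt2Aux.cnorm_eq_norm]; exact hce
      rw [Stmt2Aux.cnorm_eq_norm]
      have hsplit : Stmt2Aux.toE (fun p : (Fin 2 × Fin 2) × Fin m => φ p - eprAmp p.1.1 p.1.2 * e p.2)
          = Stmt2Aux.toE φ - Stmt2Aux.toE (fun p : (Fin 2 × Fin 2) × Fin m => eprAmp p.1.1 p.1.2 * e p.2) := rfl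
      rw [hsplit]
      have h1 : ‖Stmt2Aux.toE (fun p : (Fin 2 × Fin 2) × Fin m => eprAmp p.1.1 p.1.2 * e p.2)‖ = 1 := by
        rw [Stmt2Aux.epr_norm, heE]
      calc ‖Stmt2Aux.toE φ - _‖ ≤ ‖Stmt2Aux.toE φ‖ + ‖Stmt2Aux.toE (fun p : (Fin 2 × Fin 2) × Fin m => eprAmp p.1.1 p.1.2 * e p.2)‖ := norm_sub_le _ _
        _ = 2 := by rw [hφE, h1]; norm_num
        _ ≤ 2 * δ := by linarith

  push_neg at hδ1
  -- main case: δ < 1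
  set v : Fin m → ℂ := fun k => (φ ((0,0),k) + φ ((1,1),k)) * ((Real.sqrt 2 : ℝ) : ℂ)⁻¹ with hv
  set R : (Fin 2 × Fin 2) × Fin m → ℂ := fun p => φ p - eprAmp p.1.1 p.1.2 * v p.2 with hRdef
  have hSX := Stmt2Aux.cnorm_sq_of_le hX
  have hSZ := Stmt2Aux.cnorm_sq_of_le hZ
  rw [Stmt2Aux.sum_expand (fun p => ‖(((sx ⊗ₖ sx) ⊗ₖ (1 : Matrix (Fin m) (Fin m) ℂ)).mulVec φ - φ) p‖^2)] at hSX
  rw [Stmt2Aux.sum_expand (fun p => ‖(((sz ⊗ₖ sz) ⊗ₖ (1 : Matrix (Fin m) (Fin m) ℂ)).mulVec φ - φ) p‖^2)] at hSZ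
  simp only [Pi.sub_apply, Stmt2Aux.X00, Stmt2Aux.X01, Stmt2Aux.X10, Stmt2Aux.X11] at hSX
  simp only [Pi.sub_apply, Stmt2Aux.Z00, Stmt2Aux.Z01, Stmt2Aux.Z10, Stmt2Aux.Z11] at hSZ
  have hA : ∑ k, 2 * ‖φ ((0,0),k) - φ ((1,1),k)‖^2 ≤ δ^2 := by
    refine le_trans (Finset.sum_le_sum ?_) hSX
    intro k _
    rw [norm_sub_rev (φ ((1,1),k)) (φ ((0,0),k))]
    have h1 : (0:ℝ) ≤ ‖φ ((1,0),k) - φ ((0,1),k)‖^2 := sq_nonneg _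
    have h2 : (0:ℝ) ≤ ‖φ ((0,1),k) - φ ((1,0),k)‖^2 := sq_nonneg _
    linarith
  have hBC : ∑ k, (4*‖φ ((0,1),k)‖^2 + 4*‖φ ((1,0),k)‖^2) ≤ δ^2 := by
    refine le_trans (Finset.sum_le_sum ?_) hSZ
    intro k _
    simp only [sub_self, norm_zero, Stmt2Aux.n4]
    norm_num
  -- residual values
  have hR00 : ∀ k, R ((0,0),k) = (φ ((0,0),k) - φ ((1,1),k))/2 := by
    intro k
    show φ ((0,0),k) - eprAmp 0 0 * ((φ ((0,0),k) + φ ((1,1),k)) * ((Real.sqrt 2 : ℝ) : ℂ)⁻¹) = _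
    rw [show eprAmp 0 0 = ((Real.sqrt 2 : ℝ) : ℂ)⁻¹ from by simp [eprAmp]]
    calc φ ((0,0),k) - ((Real.sqrt 2 : ℝ) : ℂ)⁻¹ * ((φ ((0,0),k) + φ ((1,1),k)) * ((Real.sqrt 2 : ℝ) : ℂ)⁻¹)
        = φ ((0,0),k) - (φ ((0,0),k) + φ ((1,1),k)) * (((Real.sqrt 2 : ℝ) : ℂ)⁻¹ * ((Real.sqrt 2 : ℝ) : ℂ)⁻¹) := by ring
      _ = (φ ((0,0),k) - φ ((1,1),k))/2 := by rw [Stmt2Aux.s_mul_s]; ring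
  have hR11 : ∀ k, R ((1,1),k) = (φ ((1,1),k) - φ ((0,0),k))/2 := by
    intro k
    show φ ((1,1),k) - eprAmp 1 1 * ((φ ((0,0),k) + φ ((1,1),k)) * ((Real.sqrt 2 : ℝ) : ℂ)⁻¹) = _
    rw [show eprAmp 1 1 = ((Real.sqrt 2 : ℝ) : ℂ)⁻¹ from by simp [eprAmp]]
    calc φ ((1,1),k) - ((Real.sqrt 2 : ℝ) : ℂ)⁻¹ * ((φ ((0,0),k) + φ ((1,1),k)) * ((Real.sqrt 2 : ℝ) : ℂ)⁻¹)
        = φ ((1,1),k) - (φ ((0,0),k) + φ ((1,1),k)) * (((Real.sqrt 2 : ℝ) : ℂ)⁻¹ * ((Real.sqrt 2 : ℝ) : ℂ)⁻¹) := by ring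
      _ = (φ ((1,1),k) - φ ((0,0),k))/2 := by rw [Stmt2Aux.s_mul_s]; ring
  have hR01 : ∀ k, R ((0,1),k) = φ ((0,1),k) := by
    intro k
    show φ ((0,1),k) - eprAmp 0 1 * _ = _
    rw [show eprAmp 0 1 = 0 from by simp [eprAmp]]
    ring
  have hR10 : ∀ k, R ((1,0),k) = φ ((1,0),k) := by
    intro k
    show φ ((1,0),k) - eprAmp 1 0 * _ = _
    rw [show eprAmp 1 0 = 0 from by simp [eprAmp]]
    ring
  have hSRnn : (0:ℝ) ≤ ∑ p, ‖R p‖^2 := Finset.sum_nonneg fun _ _ => sq_nonneg _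
  have hSR : ∑ p, ‖R p‖^2 ≤ δ^2/2 := by
    rw [Stmt2Aux.sum_expand (fun p => ‖R p‖^2)]
    have step : ∀ k ∈ (Finset.univ : Finset (Fin m)),
        ‖R ((0,0),k)‖^2 + ‖R ((0,1),k)‖^2 + ‖R ((1,0),k)‖^2 + ‖R ((1,1),k)‖^2
          ≤ (1/4) * (2 * ‖φ ((0,0),k) - φ ((1,1),k)‖^2) + (1/4) * (4*‖φ ((0,1),k)‖^2 + 4*‖φ ((1,0),k)‖^2) := by
      intro k _
      rw [hR00 k, hR01 k, hR10 k, hR11 k, Stmt2Aux.ndiv2, Stmt2Aux.ndiv2,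
        norm_sub_rev (φ ((1,1),k)) (φ ((0,0),k))]
      linarith
    calc ∑ k, (‖R ((0,0),k)‖^2 + ‖R ((0,1),k)‖^2 + ‖R ((1,0),k)‖^2 + ‖R ((1,1),k)‖^2)
        ≤ ∑ k, ((1/4) * (2 * ‖φ ((0,0),k) - φ ((1,1),k)‖^2) + (1/4) * (4*‖φ ((0,1),k)‖^2 + 4*‖φ ((1,0),k)‖^2)) :=
          Finset.sum_le_sum step
      _ = (1/4) * (∑ k, 2 * ‖φ ((0,0),k) - φ ((1,1),k)‖^2) + (1/4) * (∑ k, (4*‖φ ((0,1),k)‖^2 + 4*‖φ ((1,0),k)‖^2)) := by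
          rw [Finset.mul_sum, Finset.mul_sum, ← Finset.sum_add_distrib]
      _ ≤ (1/4) * δ^2 + (1/4) * δ^2 := by
          have h1 := mul_le_mul_of_nonneg_left hA (by norm_num : (0:ℝ) ≤ 1/4)
          have h2 := mul_le_mul_of_nonneg_left hBC (by norm_num : (0:ℝ) ≤ 1/4)
          linarith
      _ = δ^2/2 := by ring
  have hKey : ∑ k, ‖v k‖^2 = 1 - ∑ p, ‖R p‖^2 := by
    have hkey2 : ∑ k, ‖v k‖^2 + ∑ p, ‖R p‖^2 = ∑ p, ‖φ p‖^2 := by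
      rw [Stmt2Aux.sum_expand (fun p => ‖R p‖^2), Stmt2Aux.sum_expand (fun p => ‖φ p‖^2),
        ← Finset.sum_add_distrib]
      refine Finset.sum_congr rfl fun k _ => ?_
      rw [hR00 k, hR01 k, hR10 k, hR11 k, Stmt2Aux.ndiv2, Stmt2Aux.ndiv2,
        norm_sub_rev (φ ((1,1),k)) (φ ((0,0),k))]
      show ‖(φ ((0,0),k) + φ ((1,1),k)) * ((Real.sqrt 2 : ℝ) : ℂ)⁻¹‖^2 + _ = _
      rw [norm_mul, mul_pow, Stmt2Aux.s_norm_sq]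
      have hp := Stmt2Aux.parallelo (φ ((0,0),k)) (φ ((1,1),k))
      linarith
    linarith [hkey2, hφ2]
  have hSvnn : (0:ℝ) ≤ ∑ k, ‖v k‖^2 := Finset.sum_nonneg fun _ _ => sq_nonneg _
  set t := ‖Stmt2Aux.toE v‖ with htdef
  have ht0 : 0 ≤ t := norm_nonneg _
  have ht2 : t^2 = ∑ k, ‖v k‖^2 := by
    rw [htdef, EuclideanSpace.norm_eq]
    show Real.sqrt (∑ k, ‖v k‖^2)^2 = _
    rw [Real.sq_sqrt hSvnn]
  have ht1 : t ≤ 1 := by nlinarith [hKey, ht2, hSRnn]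
  have htpos : 0 < t := by nlinarith [hKey, ht2, hSR, hδ1, hδ, mul_nonneg ht0 ht0]
  have ht2' : 1 - δ^2/2 ≤ t^2 := by rw [ht2, hKey]; linarith [hSR]
  clear_value t
  refine ⟨fun k => v k * ((t:ℝ):ℂ)⁻¹, ?_, ?_⟩
  · rw [Stmt2Aux.cnorm_eq_norm]
    have hsm : Stmt2Aux.toE (fun k => v k * ((t:ℝ):ℂ)⁻¹) = ((t:ℝ):ℂ)⁻¹ • Stmt2Aux.toE v := by
      ext k
      show v k * ((t:ℝ):ℂ)⁻¹ = ((t:ℝ):ℂ)⁻¹ * v k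
      ring
    rw [hsm, norm_smul, norm_inv, Complex.norm_real, Real.norm_eq_abs, abs_of_pos htpos, ← htdef]
    exact inv_mul_cancel₀ htpos.ne'
  · rw [Stmt2Aux.cnorm_eq_norm]
    have hEq : Stmt2Aux.toE (fun p : (Fin 2 × Fin 2) × Fin m => φ p - eprAmp p.1.1 p.1.2 * ((fun k => v k * ((t:ℝ):ℂ)⁻¹) p.2))
        = Stmt2Aux.toE R + Stmt2Aux.toE (fun p : (Fin 2 × Fin 2) × Fin m => eprAmp p.1.1 p.1.2 * ((fun k => (1 - ((t:ℝ):ℂ)⁻¹) * v k) p.2)) := by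
      ext p
      show φ p - eprAmp p.1.1 p.1.2 * (v p.2 * ((t:ℝ):ℂ)⁻¹)
          = (φ p - eprAmp p.1.1 p.1.2 * v p.2) + eprAmp p.1.1 p.1.2 * ((1 - ((t:ℝ):ℂ)⁻¹) * v p.2)
      ring
    rw [hEq]
    refine le_trans (norm_add_le _ _) ?_
    have haR : ‖Stmt2Aux.toE R‖^2 ≤ δ^2/2 := by
      rw [EuclideanSpace.norm_eq]
      show Real.sqrt (∑ p, ‖R p‖^2)^2 ≤ _
      rw [Real.sq_sqrt hSRnn]
      exact hSR
    have haR0 : (0:ℝ) ≤ ‖Stmt2Aux.toE R‖ := norm_nonneg _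
    have hinv : t * t⁻¹ = 1 := mul_inv_cancel₀ htpos.ne'
    have h1t' : (1:ℝ) ≤ t⁻¹ := by
      nlinarith [hinv, mul_nonneg (le_of_lt (inv_pos.mpr htpos)) (by linarith : (0:ℝ) ≤ 1 - t)]
    have hb : ‖Stmt2Aux.toE (fun p : (Fin 2 × Fin 2) × Fin m => eprAmp p.1.1 p.1.2 * ((fun k => (1 - ((t:ℝ):ℂ)⁻¹) * v k) p.2))‖ = 1 - t := by
      rw [Stmt2Aux.epr_norm (fun k => (1 - ((t:ℝ):ℂ)⁻¹) * v k)]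
      have hsm2 : Stmt2Aux.toE (fun k => (1 - ((t:ℝ):ℂ)⁻¹) * v k) = (1 - ((t:ℝ):ℂ)⁻¹) • Stmt2Aux.toE v := rfl
      rw [hsm2, norm_smul, ← htdef]
      rw [show ((1:ℂ) - ((t:ℝ):ℂ)⁻¹) = (((1 - t⁻¹ : ℝ)):ℂ) by push_cast; ring]
      rw [Complex.norm_real, Real.norm_eq_abs]
      rw [abs_of_nonpos (by linarith : 1 - t⁻¹ ≤ 0), neg_sub, sub_mul,
        inv_mul_cancel₀ htpos.ne', one_mul]
    rw [hb]
    have key : ∀ a : ℝ, 0 ≤ a → a^2 ≤ δ^2/2 → a + (1 - t) ≤ 2*δ := by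
      intro a ha0 ha2
      have haδ : a ≤ δ := by nlinarith
      have h1t : 1 - t ≤ δ/2 := by
        nlinarith [ht2', ht1, ht0, hδ, hδ1,
          mul_nonneg ht0 (by linarith : (0:ℝ) ≤ 1 - t),
          mul_nonneg (by linarith : (0:ℝ) ≤ 1 - δ) hδ]
      linarith
    exact key _ haR0 haR

end
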